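/- Let α > 0, β > 0, 0 < k < 1, C > 0, τ > 0, κ > 0, and let B be an integer with B ≥ 1. Let w* be the unique positive solution of α·w^(k−1)·(1 − 2(w/(Cτ))^B) = β·w·(w/(Cτ))^B, and set p* = 2(w*/(Cτ))^B. Assume B > (2 − k)(1 − p*). Define M = (2 − k)(1 − p*)·α·(w*)^(k−1)/τ and N = B·α·(w*)^(k−1)/τ. Then every complex root λ of λ + κM + κN·exp(−λτ) = 0 has negative real part if and only if κ·α·(w*)^(k−1)·√(B² − (k−2)²(1−p*)²) < arccos((k−2)(1−p*)/B). -/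

import Mathlib

open Real Complex

set_option maxHeartbeats 1000000

lemma arccos_lt_pi' {x : ℝ} (h : -1 < x) : Real.arccos x < Real.pi := by
  unfold Real.arccos
  have := Real.neg_pi_div_two_lt_arcsin.mpr h
  linarith

lemma arccos_antitone {x y : ℝ} (h2 : x ≤ y) : Real.arccos y ≤ Real.arccos x := by
  unfold Real.arccos
  have : Real.arcsin x ≤ Real.arcsin y := Real.monotone_arcsin h2
  linarith

/-- Real/imaginary decomposition of the characteristic equation. -/
lemma char_re_im (a b τ : ℝ) (z : ℂ) :
    z + (a : ℂ) + (b : ℂ) * Complex.exp (-z * (τ : ℂ)) = 0 ↔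
    (z.re + a + b * (Real.exp (-(z.re * τ)) * Real.cos (z.im * τ)) = 0 ∧
     z.im - b * (Real.exp (-(z.re * τ)) * Real.sin (z.im * τ)) = 0) := by
  rw [Complex.ext_iff]
  have hre : ((-z * (τ:ℂ))).re = -(z.re * τ) := by simp
  have him : ((-z * (τ:ℂ))).im = -(z.im * τ) := by simp
  constructor
  · rintro ⟨h1, h2⟩
    constructor
    · simpa [Complex.exp_re, hre, him, Real.cos_neg] using h1
    · have := h2
      simp [Complex.exp_im, hre, him, Real.sin_neg] at this
      linarith
  · rintro ⟨h1, h2⟩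
    constructor
    · simpa [Complex.exp_re, hre, him, Real.cos_neg] using h1
    · simp [Complex.exp_im, hre, him, Real.sin_neg]
      linarith

/-- Hayes-type stability criterion for λ + a + b e^{-λτ} = 0 with 0 < a < b, τ > 0. -/
lemma hayes (a b τ : ℝ) (ha : 0 < a) (hab : a < b) (hτ : 0 < τ) :
    (∀ z : ℂ, z + (a : ℂ) + (b : ℂ) * Complex.exp (-z * (τ : ℂ)) = 0 → z.re < 0) ↔
    τ * Real.sqrt (b ^ 2 - a ^ 2) < Real.arccos (-a / b) := by
  have hb : 0 < b := ha.trans hab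
  have hba2 : 0 < b ^ 2 - a ^ 2 := by nlinarith
  set ω : ℝ := Real.sqrt (b ^ 2 - a ^ 2) with hω
  have hωpos : 0 < ω := Real.sqrt_pos.2 hba2
  have hq1 : -1 < -a / b := by
    rw [neg_div, neg_lt_neg_iff, div_lt_one hb]; exact hab
  have hq1' : (-1:ℝ) ≤ -a / b := hq1.le
  have hq2 : -a / b < 0 := div_neg_of_neg_of_pos (by linarith) hb
  have hq2' : -a / b ≤ 1 := by linarith
  set θ₀ : ℝ := Real.arccos (-a / b) with hθ₀
  have hθ₀pos : 0 < θ₀ := Real.arccos_pos.2 (by linarith)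
  have hθ₀pi : θ₀ < Real.pi := arccos_lt_pi' hq1
  have hcosθ₀ : Real.cos θ₀ = -a / b := Real.cos_arccos hq1' hq2'
  have hsinθ₀ : Real.sin θ₀ = ω / b := by
    rw [hθ₀, Real.sin_arccos]
    rw [show 1 - (-a / b) ^ 2 = (b ^ 2 - a ^ 2) / b ^ 2 by field_simp]
    rw [Real.sqrt_div hba2.le, Real.sqrt_sq hb.le]
  have hba' : b * (-a / b) = -a := by
    rw [mul_comm, div_mul_cancel₀ _ hb.ne']
  have hbb' : b * (ω / b) = ω := by
    rw [mul_comm, div_mul_cancel₀ _ hb.ne']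
  constructor
  · -- stability → condition
    intro h
    by_contra hc
    push_neg at hc   -- θ₀ ≤ τ * ω
    rcases eq_or_lt_of_le hc with heq | hlt
    · -- equality: purely imaginary root
      have hωτ : ω * τ = θ₀ := by rw [heq]; ring
      have hroot : ((ω : ℂ) * Complex.I) + (a : ℂ) + (b : ℂ) *
          Complex.exp (-(((ω : ℂ) * Complex.I)) * (τ : ℂ)) = 0 := by
        rw [char_re_im]
        have hre0 : ((ω : ℂ) * Complex.I).re = 0 := by simp
        have him0 : ((ω : ℂ) * Complex.I).im = ω := by simp
        rw [hre0, him0, hωτ, hcosθ₀, hsinθ₀]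
        rw [show -((0:ℝ)*τ) = 0 by ring, Real.exp_zero, one_mul, one_mul, hba', hbb']
        constructor <;> ring
      have := h _ hroot
      simp at this
    · -- strict: construct root with positive real part via IVT
      have hφθ₀ : θ₀ < b * τ * Real.sin θ₀ := by
        rw [hsinθ₀, show b * τ * (ω / b) = τ * (b * (ω/b)) by ring, hbb']
        exact hlt
      set S : Set ℝ := Set.Icc θ₀ Real.pi ∩ {θ | b * τ * Real.sin θ ≤ θ} with hS
      have hSclosed : IsClosed S :=
        isClosed_Icc.inter (isClosed_le (by fun_prop) continuous_id)
      have hπS : Real.pi ∈ S := by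
        constructor
        · exact ⟨hθ₀pi.le, le_refl _⟩
        · simp [Real.sin_pi, Real.pi_pos.le]
      have hSbdd : BddBelow S := ⟨θ₀, fun θ hθ => hθ.1.1⟩
      set θh : ℝ := sInf S with hθh
      have hθhS : θh ∈ S := hSclosed.csInf_mem ⟨_, hπS⟩ hSbdd
      have hθ₀θh : θ₀ ≤ θh := hθhS.1.1
      have hθhπ : θh ≤ Real.pi := hθhS.1.2
      have hlt_mem : ∀ θ ∈ Set.Ico θ₀ θh, θ < b * τ * Real.sin θ := by
        intro θ hθ
        have hns : θ ∉ S := notMem_of_lt_csInf hθ.2 hSbdd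
        by_contra hcon
        push_neg at hcon
        exact hns ⟨⟨hθ.1, hθ.2.le.trans hθhπ⟩, hcon⟩
      have hθ₀lt : θ₀ < θh := by
        rcases eq_or_lt_of_le hθ₀θh with he | h'; swap; · exact h'
        exfalso
        have h2 := hθhS.2
        rw [← he] at h2
        exact absurd h2 (not_le.2 hφθ₀)
      have hge : θh ≤ b * τ * Real.sin θh := by
        have hcont : ContinuousAt (fun θ => b * τ * Real.sin θ - θ) θh := by fun_prop
        have hev : ∀ᶠ θ in nhdsWithin θh (Set.Iio θh),
            0 ≤ b * τ * Real.sin θ - θ := by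
          filter_upwards [Ioo_mem_nhdsLT_of_mem (Set.mem_Ioc.2 ⟨hθ₀lt, le_refl _⟩)] with θ hθ
          have := hlt_mem θ ⟨hθ.1.le, hθ.2⟩
          linarith
        have := ge_of_tendsto (hcont.tendsto.mono_left nhdsWithin_le_nhds) hev
        linarith
      have hzero : b * τ * Real.sin θh = θh := le_antisymm hθhS.2 hge
      have hθhπ' : θh < Real.pi := by
        rcases eq_or_lt_of_le hθhπ with he | h'; swap; · exact h'
        exfalso
        rw [he, Real.sin_pi, mul_zero] at hzero
        nlinarith [Real.pi_pos]
      have hsinθh : 0 < Real.sin θh :=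
        Real.sin_pos_of_pos_of_lt_pi (hθ₀pos.trans hθ₀lt) hθhπ'
      set X : ℝ → ℝ := fun θ => Real.log (b * τ * Real.sin θ / θ) / τ with hX
      set G : ℝ → ℝ := fun θ => X θ + a + θ * Real.cos θ / (τ * Real.sin θ) with hG
      have hθhne : θh ≠ 0 := (hθ₀pos.trans hθ₀lt).ne'
      have hGθh : G θh < 0 := by
        have hXθh : X θh = 0 := by
          simp only [hX]
          rw [hzero, div_self hθhne, Real.log_one, zero_div]
        have hfrac : θh * Real.cos θh / (τ * Real.sin θh) = b * Real.cos θh := by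
          rw [div_eq_iff (by positivity : (τ * Real.sin θh) ≠ 0)]
          nth_rewrite 1 [← hzero]
          ring
        have hcoslt : Real.cos θh < -a / b := by
          rw [← hcosθ₀]
          exact Real.cos_lt_cos_of_nonneg_of_le_pi hθ₀pos.le hθhπ hθ₀lt
        have h5 : b * Real.cos θh < -a := by
          have := mul_lt_mul_of_pos_left hcoslt hb
          rw [hba'] at this
          exact this
        simp only [hG]
        rw [hXθh, hfrac]
        linarith
      have hGθ₀ : 0 < G θ₀ := by
        have hXθ₀ : 0 < X θ₀ := by
          simp only [hX]
          apply div_pos _ hτ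
          apply Real.log_pos
          rw [lt_div_iff₀ hθ₀pos, one_mul]
          exact hφθ₀
        have hfrac : θ₀ * Real.cos θ₀ / (τ * Real.sin θ₀) = -(a * θ₀ / (τ * ω)) := by
          rw [hcosθ₀, hsinθ₀]
          rw [div_eq_iff (by positivity : (τ * (ω / b)) ≠ 0)]
          field_simp
        have hlt2 : a * θ₀ / (τ * ω) < a := by
          rw [div_lt_iff₀ (by positivity)]
          nlinarith
        simp only [hG]
        rw [hfrac]
        linarith
      have hsub : ∀ θ ∈ Set.Icc θ₀ θh, 0 < θ ∧ 0 < Real.sin θ := by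
        intro θ hθ
        have h1 : 0 < θ := lt_of_lt_of_le hθ₀pos hθ.1
        exact ⟨h1, Real.sin_pos_of_pos_of_lt_pi h1 (lt_of_le_of_lt hθ.2 hθhπ')⟩
      have hGcont : ContinuousOn G (Set.Icc θ₀ θh) := by
        simp only [hG, hX]
        apply ContinuousOn.add
        apply ContinuousOn.add
        · apply ContinuousOn.div_const
          apply ContinuousOn.log
          · apply ContinuousOn.div
            · fun_prop
            · fun_prop
            · intro θ hθ; exact (hsub θ hθ).1.ne'
          · intro θ hθ
            obtain ⟨h1, h2⟩ := hsub θ hθ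
            positivity
        · exact continuousOn_const
        · apply ContinuousOn.div
          · fun_prop
          · fun_prop
          · intro θ hθ
            obtain ⟨h1, h2⟩ := hsub θ hθ
            positivity
      have hIVT := intermediate_value_Ioo' hθ₀lt.le hGcont
      obtain ⟨θs, hθsmem, hGθs⟩ := hIVT (Set.mem_Ioo.2 ⟨hGθh, hGθ₀⟩)
      have hθspos : 0 < θs := hθ₀pos.trans hθsmem.1
      have hsinθs : 0 < Real.sin θs :=
        Real.sin_pos_of_pos_of_lt_pi hθspos (hθsmem.2.trans hθhπ')
      have hφθs : θs < b * τ * Real.sin θs := hlt_mem θs ⟨hθsmem.1.le, hθsmem.2⟩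
      have hrpos : 0 < b * τ * Real.sin θs / θs := by positivity
      have hrgt1 : 1 < b * τ * Real.sin θs / θs := by
        rw [lt_div_iff₀ hθspos, one_mul]; exact hφθs
      have hXθs : 0 < X θs := div_pos (Real.log_pos hrgt1) hτ
      have hexp : Real.exp (-(X θs * τ)) = θs / (b * τ * Real.sin θs) := by
        simp only [hX]
        rw [div_mul_cancel₀ _ hτ.ne', Real.exp_neg, Real.exp_log hrpos, inv_div]
      have hGθs' : X θs + a + θs * Real.cos θs / (τ * Real.sin θs) = 0 := hGθs
      have hre0 : ((X θs : ℂ) + (θs / τ : ℂ) * Complex.I).re = X θs := by simp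
      have him0 : ((X θs : ℂ) + (θs / τ : ℂ) * Complex.I).im = θs / τ := by simp
      have hroot : ((X θs : ℂ) + (θs / τ : ℂ) * Complex.I) + (a : ℂ) + (b : ℂ) *
          Complex.exp (-((X θs : ℂ) + (θs / τ : ℂ) * Complex.I) * (τ : ℂ)) = 0 := by
        rw [char_re_im]
        rw [hre0, him0, div_mul_cancel₀ θs hτ.ne', hexp]
        constructor
        · have hred : b * (θs / (b * τ * Real.sin θs) * Real.cos θs)
              = θs * Real.cos θs / (τ * Real.sin θs) := by
            field_simp
          rw [hred]
          exact hGθs'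
        · have hred : b * (θs / (b * τ * Real.sin θs) * Real.sin θs) = θs / τ := by
            field_simp
          rw [hred, sub_self]
      have := h _ hroot
      rw [hre0] at this
      linarith
  · -- condition → stability
    intro hcond z hz
    by_contra hre
    push_neg at hre
    set x := z.re with hx
    set y := z.im with hy
    obtain ⟨hRe, hIm⟩ := (char_re_im a b τ z).1 hz
    set E : ℝ := Real.exp (-(x * τ)) with hE
    have hEpos : 0 < E := Real.exp_pos _
    have hE1 : E ≤ 1 := by
      rw [hE]
      apply Real.exp_le_one_iff.2
      nlinarith
    have h1 : b * (E * Real.cos (y * τ)) = -(x + a) := by linarith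
    have h2 : b * (E * Real.sin (y * τ)) = y := by linarith
    have hpyth := Real.sin_sq_add_cos_sq (y * τ)
    have e1 : (x + a) ^ 2 = (b * (E * Real.cos (y * τ))) ^ 2 := by rw [h1]; ring
    have e2 : y ^ 2 = (b * (E * Real.sin (y * τ))) ^ 2 := by rw [h2]
    have hsq : (x + a) ^ 2 + y ^ 2 = b ^ 2 * E ^ 2 := by
      linear_combination e1 + e2 + (b * E) ^ 2 * hpyth
    have hE2 : E ^ 2 ≤ 1 := by nlinarith
    have hxa2 : a ^ 2 ≤ (x + a) ^ 2 := by nlinarith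
    have hy2 : y ^ 2 ≤ b ^ 2 - a ^ 2 := by
      nlinarith [mul_le_mul_of_nonneg_left hE2 (sq_nonneg b)]
    have habs : |y| ≤ ω := by
      rw [← Real.sqrt_sq_eq_abs]
      exact Real.sqrt_le_sqrt hy2
    have htle : |y| * τ < θ₀ := by
      calc |y| * τ ≤ ω * τ := mul_le_mul_of_nonneg_right habs hτ.le
        _ = τ * ω := by ring
        _ < θ₀ := hcond
    have htnn : 0 ≤ |y| * τ := by positivity
    have hc1 : Real.cos (|y| * τ) = Real.cos (y * τ) := by
      rw [show |y| * τ = |y * τ| by rw [abs_mul, abs_of_pos hτ], Real.cos_abs]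
    have hcneg : Real.cos (y * τ) < 0 := by
      by_contra hcc
      push_neg at hcc
      have h4 : 0 ≤ b * (E * Real.cos (y * τ)) :=
        mul_nonneg hb.le (mul_nonneg hEpos.le hcc)
      rw [h1] at h4
      linarith
    have h3 : b * Real.cos (y * τ) ≤ -a := by
      have hprod := mul_nonneg (mul_pos hb (neg_pos.2 hcneg)).le (sub_nonneg.2 hE1)
      have hring : (b * -Real.cos (y * τ)) * (1 - E)
          = -(b * Real.cos (y * τ)) + b * (E * Real.cos (y * τ)) := by ring
      rw [hring, h1] at hprod
      linarith
    have hcosb : Real.cos (|y| * τ) ≤ -a / b := by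
      rw [hc1, le_div_iff₀ hb]
      linarith [h3]
    have harc : θ₀ ≤ |y| * τ := by
      calc θ₀ = Real.arccos (-a / b) := hθ₀
        _ ≤ Real.arccos (Real.cos (|y| * τ)) := arccos_antitone hcosb
        _ = |y| * τ := Real.arccos_cos htnn (by linarith [hθ₀pi])
    linarith

/-- Case II local stability criterion: with w* the (unique) positive equilibrium,
p* = 2(w*/(Cτ))^B, B > (2−k)(1−p*), M = (2−k)(1−p*)·α·(w*)^(k−1)/τ and
N = B·α·(w*)^(k−1)/τ, every root of λ + κM + κN·e^{−λτ} = 0 has negative real part iff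
κ·α·(w*)^(k−1)·√(B² − (k−2)²(1−p*)²) < arccos((k−2)(1−p*)/B). -/
theorem stmt12 (α β k C τ κ : ℝ) (B : ℤ) (w p M N : ℝ)
    (hα : 0 < α) (hβ : 0 < β) (hk0 : 0 < k) (hk1 : k < 1)
    (hC : 0 < C) (hτ : 0 < τ) (hκ : 0 < κ) (hB : 1 ≤ B)
    (hw : 0 < w)
    (hweq : α * w ^ (k - 1) * (1 - 2 * (w / (C * τ)) ^ B) = β * w * (w / (C * τ)) ^ B)
    (hp : p = 2 * (w / (C * τ)) ^ B)
    (hBp : (2 - k) * (1 - p) < (B : ℝ))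
    (hM : M = (2 - k) * (1 - p) * α * w ^ (k - 1) / τ)
    (hN : N = (B : ℝ) * α * w ^ (k - 1) / τ) :
    (∀ z : ℂ, z + (κ : ℂ) * (M : ℂ) + (κ : ℂ) * (N : ℂ) * Complex.exp (-z * (τ : ℂ)) = 0 →
      z.re < 0) ↔
    κ * α * w ^ (k - 1) * Real.sqrt ((B : ℝ) ^ 2 - (k - 2) ^ 2 * (1 - p) ^ 2) <
      Real.arccos ((k - 2) * (1 - p) / (B : ℝ)) := by
  have hs : 0 < α * w ^ (k - 1) := mul_pos hα (Real.rpow_pos_of_pos hw _)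
  have hq : 0 < (w / (C * τ)) ^ B := zpow_pos (div_pos hw (mul_pos hC hτ)) B
  have h1p : 0 < 1 - p := by
    by_contra hc
    push_neg at hc
    have h2 : α * w ^ (k - 1) * (1 - 2 * (w / (C * τ)) ^ B) ≤ 0 := by
      apply mul_nonpos_of_nonneg_of_nonpos hs.le
      rw [hp] at hc; linarith
    have h3 : 0 < β * w * (w / (C * τ)) ^ B := by positivity
    rw [← hweq] at h3
    linarith [h2, h3]
  have hBpos : (0:ℝ) < (B:ℝ) := by exact_mod_cast (by omega : (0:ℤ) < B)
  have hMpos : 0 < M := by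
    rw [hM]
    have : 0 < (2 - k) * (1 - p) := by nlinarith
    positivity
  have hNpos : 0 < N := by rw [hN]; positivity
  have hMN : M < N := by
    rw [hM, hN, div_lt_div_iff₀ hτ hτ]
    have h2 : (2 - k) * (1 - p) * (α * w ^ (k - 1)) < (B:ℝ) * (α * w ^ (k - 1)) :=
      mul_lt_mul_of_pos_right hBp hs
    have h3 := mul_lt_mul_of_pos_right h2 hτ
    linarith [h3]
  have key := hayes (κ * M) (κ * N) τ (by positivity)
    (mul_lt_mul_of_pos_left hMN hκ) hτ
  have harg : -(κ * M) / (κ * N) = (k - 2) * (1 - p) / (B : ℝ) := by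
    rw [hM, hN]
    field_simp
    ring
  have hsqrt : τ * Real.sqrt ((κ * N) ^ 2 - (κ * M) ^ 2)
      = κ * α * w ^ (k - 1) * Real.sqrt ((B : ℝ) ^ 2 - (k - 2) ^ 2 * (1 - p) ^ 2) := by
    have h1 : (κ * N) ^ 2 - (κ * M) ^ 2
        = (κ * (α * w ^ (k - 1)) / τ) ^ 2 * ((B : ℝ) ^ 2 - (k - 2) ^ 2 * (1 - p) ^ 2) := by
      rw [hM, hN]
      field_simp
      ring
    have h2 : ∀ Q : ℝ, τ * (κ * (α * w ^ (k - 1)) / τ * Q) = κ * α * w ^ (k - 1) * Q := by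
      intro Q
      field_simp
    rw [h1, Real.sqrt_mul (sq_nonneg _), Real.sqrt_sq (by positivity)]
    exact h2 _
  rw [show ((κ:ℂ) * (M:ℂ)) = (((κ * M : ℝ)):ℂ) by push_cast; ring,
      show ((κ:ℂ) * (N:ℂ)) = (((κ * N : ℝ)):ℂ) by push_cast; ring,
      key, hsqrt, harg]
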